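/- Let Ω be a TC-space and let κ, τ be stopping times with κ ≤ τ pointwise. For ω ∈ Ω define τ'_ω(ω') = τ(ω ∗_κ ω') − κ(ω) if κ(ω) < ∞ and ω' ∈ 𝒞_{ω,κ(ω)}, and τ'_ω(ω') = +∞ otherwise. Then the map (ω, ω') ↦ τ'_ω(ω') is jointly measurable; for every fixed ω ∈ Ω the map τ'_ω is a stopping time; and τ(ω ∗_κ ω') = κ(ω) + τ'_ω(ω') whenever κ(ω) < ∞ and ω' ∈ 𝒞_{ω,κ(ω)}. -/

import Mathlib

open MeasureTheory Set NNReal ENNReal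

/-- A T-space (truncated space): a filtered measurable space `(Ω, 𝓕, (𝓕ₜ)_{t ∈ [0,∞)})`
with `𝓕 = ⋁ₜ 𝓕ₜ`, equipped with a truncation family `(Tₜ)` such that `(t, ω) ↦ Tₜ ω` is
jointly measurable, `Tₜ ∘ Tₛ = T_{s ∧ t}` and `𝓕ₜ = σ(Tₜ)`. -/
structure TSpace (Ω : Type*) [mΩ : MeasurableSpace Ω] where
  filt : ℝ≥0 → MeasurableSpace Ω
  T : ℝ≥0 → Ω → Ω
  iSup_filt : (⨆ t : ℝ≥0, filt t) = mΩ
  meas_T : Measurable fun p : ℝ≥0 × Ω => T p.1 p.2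
  T_comp : ∀ (s t : ℝ≥0) (ω : Ω), T t (T s ω) = T (min s t) ω
  filt_eq : ∀ t : ℝ≥0, filt t = MeasurableSpace.comap (T t) mΩ

namespace TSpace

variable {Ω : Type*} [mΩ : MeasurableSpace Ω]

/-- Truncation indexed by extended times, with the convention `T_∞ = id`. -/
noncomputable def Te (X : TSpace Ω) (t : ℝ≥0∞) (ω : Ω) : Ω :=
  if t = ∞ then ω else X.T t.toNNReal ω

/-- A (raw) stopping time on a T-space: `{τ ≤ t} ∈ 𝓕ₜ` for all `t ∈ [0,∞)`. -/
def IsStoppingTime (X : TSpace Ω) (τ : Ω → ℝ≥0∞) : Prop :=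
  ∀ t : ℝ≥0, MeasurableSet[X.filt t] {ω | τ ω ≤ t}

/-- Truncation at a stopping time: `T_τ(ω) = T_{τ(ω)}(ω)`. -/
noncomputable def Tstop (X : TSpace Ω) (τ : Ω → ℝ≥0∞) (ω : Ω) : Ω :=
  X.Te (τ ω) ω

end TSpace

open MeasureTheory Set NNReal ENNReal

/-- The positive part of an extended-real number, as an element of `ℝ≥0∞`. -/
noncomputable def EReal.posPart (x : EReal) : ℝ≥0∞ :=
  if x = ⊤ then ⊤ else ENNReal.ofReal x.toReal

/-- The (possibly `-∞`-valued) integral `∫ G dμ = ∫ G⁺ dμ − ∫ G⁻ dμ` of an extended-real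
function, meaningful whenever `∫ G⁺ dμ < ∞`. -/
noncomputable def eIntegral {Ω : Type*} [MeasurableSpace Ω] (μ : Measure Ω)
    (G : Ω → EReal) : EReal :=
  ((∫⁻ ω, (G ω).posPart ∂μ : ℝ≥0∞) : EReal) - ((∫⁻ ω, (-(G ω)).posPart ∂μ : ℝ≥0∞) : EReal)

/-- A map is universally measurable if it is `μ`-null measurable (i.e. measurable for the
`μ`-completed σ-algebra) for every Borel probability measure `μ`. -/
def UnivMeasurable {α β : Type*} [MeasurableSpace α] [MeasurableSpace β] (f : α → β) : Prop :=
  ∀ μ : Measure α, IsProbabilityMeasure μ → NullMeasurable f μ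

/-- A (universally measurable) kernel from `α` to `Ω`: a family of Borel probability measures
`ν x` such that `x ↦ ν x B` is universally measurable for every Borel set `B`. -/
def IsUKernel {α Ω : Type*} [MeasurableSpace α] [MeasurableSpace Ω]
    (ν : α → ProbabilityMeasure Ω) : Prop :=
  ∀ B : Set Ω, MeasurableSet B → UnivMeasurable fun x => (ν x : Measure Ω) B

/-- A TC-space (truncation–concatenation space): a T-space together with a measurable
compatibility set `𝒞 ⊆ Ω × [0,∞) × Ω` and a concatenation operator `∗ : 𝒞 → Ω`
(extended arbitrarily off `𝒞`, measurable on `𝒞`) satisfying the compatibility and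
truncation axioms of Definition of TC-spaces. -/
structure TCSpace (Ω : Type*) [mΩ : MeasurableSpace Ω] extends TSpace Ω where
  Comp : Set (Ω × ℝ≥0 × Ω)
  meas_Comp : MeasurableSet Comp
  conc : Ω → ℝ≥0 → Ω → Ω
  meas_conc : Measurable fun p : Comp => conc (p : Ω × ℝ≥0 × Ω).1 (p : Ω × ℝ≥0 × Ω).2.1
      (p : Ω × ℝ≥0 × Ω).2.2
  comp_left : ∀ (ω : Ω) (t : ℝ≥0) (ω' : Ω), ((ω, t, ω') ∈ Comp ↔ (T t ω, t, ω') ∈ Comp)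
  comp_right : ∀ (ω : Ω) (t : ℝ≥0) (ω' : Ω) (s : ℝ≥0),
      ((ω, t, ω') ∈ Comp ↔ (ω, t, T s ω') ∈ Comp)
  conc_left : ∀ (ω : Ω) (t : ℝ≥0) (ω' : Ω), (ω, t, ω') ∈ Comp →
      conc ω t ω' = conc (T t ω) t ω'
  trunc_conc_le : ∀ (ω : Ω) (t : ℝ≥0) (ω' : Ω) (s : ℝ≥0), (ω, t, ω') ∈ Comp → s ≤ t →
      T s (conc ω t ω') = T s ω
  trunc_conc_gt : ∀ (ω : Ω) (t : ℝ≥0) (ω' : Ω) (s : ℝ≥0), (ω, t, ω') ∈ Comp → t < s →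
      T s (conc ω t ω') = conc ω t (T (s - t) ω')

namespace TCSpace

variable {Ω : Type*} [mΩ : MeasurableSpace Ω]

/-- Concatenation at an extended time, with the convention `ω ∗_∞ ω' = ω`. -/
noncomputable def concE (X : TCSpace Ω) (ω : Ω) (t : ℝ≥0∞) (ω' : Ω) : Ω :=
  if t = ∞ then ω else X.conc ω t.toNNReal ω'

/-- Extended compatibility: any two elements are compatible at `t = ∞`. -/
def CompE (X : TCSpace Ω) (ω : Ω) (t : ℝ≥0∞) (ω' : Ω) : Prop :=
  t = ∞ ∨ (ω, t.toNNReal, ω') ∈ X.Comp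

/-- A probability measure `μ` and a kernel `ν` are compatible at a stopping time `τ`:
`ν^{≤τ}_ω(𝒞_{ω,τ(ω)}) = 1` for `μ`-almost every `ω`. -/
def MeasCompatible (X : TCSpace Ω) (μ : Measure Ω) (ν : Ω → ProbabilityMeasure Ω)
    (τ : Ω → ℝ≥0∞) : Prop :=
  ∀ᵐ ω ∂μ, (ν (X.toTSpace.Tstop τ ω) : Measure Ω) {ω' | X.CompE ω (τ ω) ω'} = 1

/-- The concatenation `μ ∗_τ ν` of a measure and a kernel at a stopping time `τ`: the
pushforward of `μ(dω) ν^{≤τ}_ω(dω')` under `(ω, ω') ↦ ω ∗_{τ(ω)} ω'`. -/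
noncomputable def concMeasure (X : TCSpace Ω) (μ : Measure Ω)
    (ν : Ω → ProbabilityMeasure Ω) (τ : Ω → ℝ≥0∞) : Measure Ω :=
  μ.bind fun ω => Measure.map (fun ω' => X.concE ω (τ ω) ω') (ν (X.toTSpace.Tstop τ ω))

/-- A tail map: `G(ω ∗_t ω') = G(ω')` for all finite `t` and compatible pairs. -/
def IsTail (X : TCSpace Ω) (G : Ω → EReal) : Prop :=
  ∀ (t : ℝ≥0) (ω ω' : Ω), (ω, t, ω') ∈ X.Comp → G (X.conc ω t ω') = G ω'

end TCSpace

/-- A universally measurable selector of a control correspondence `P`. -/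
def IsSelector {Ω : Type*} [MeasurableSpace Ω] (P : Ω → Set (ProbabilityMeasure Ω))
    (ν : Ω → ProbabilityMeasure Ω) : Prop :=
  IsUKernel ν ∧ ∀ ω, ν ω ∈ P ω

/-- A control correspondence on a TC-space is concatenable if for every `ω`, `μ ∈ P ω`,
`P`-selector `ν` and stopping time `τ`, `ν` is compatible with `μ` at `τ` and
`μ ∗_τ ν ∈ P ω`. -/
def TCSpace.Concatenable {Ω : Type*} [MeasurableSpace Ω] (X : TCSpace Ω)
    (P : Ω → Set (ProbabilityMeasure Ω)) : Prop :=
  ∀ (ω : Ω) (μ : ProbabilityMeasure Ω), μ ∈ P ω →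
    ∀ ν : Ω → ProbabilityMeasure Ω, IsSelector P ν →
      ∀ τ : Ω → ℝ≥0∞, X.toTSpace.IsStoppingTime τ →
        X.MeasCompatible (μ : Measure Ω) ν τ ∧
          ∃ μ' ∈ P ω, (μ' : Measure Ω) = X.concMeasure (μ : Measure Ω) ν τ

/-- A control correspondence on a TC-space is disintegrable if for every `ω`, `μ ∈ P ω` and
stopping time `τ` there is a `P`-selector `ν`, compatible with `μ` at `τ`, with
`μ = μ ∗_τ ν`. -/
def TCSpace.Disintegrable {Ω : Type*} [MeasurableSpace Ω] (X : TCSpace Ω)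
    (P : Ω → Set (ProbabilityMeasure Ω)) : Prop :=
  ∀ (ω : Ω) (μ : ProbabilityMeasure Ω), μ ∈ P ω →
    ∀ τ : Ω → ℝ≥0∞, X.toTSpace.IsStoppingTime τ →
      ∃ ν : Ω → ProbabilityMeasure Ω, IsSelector P ν ∧
        X.MeasCompatible (μ : Measure Ω) ν τ ∧
          (μ : Measure Ω) = X.concMeasure (μ : Measure Ω) ν τ

/-- A real path indexed by `[0,∞)` is càdlàg: right-continuous with left limits. -/
def IsCadlag (f : ℝ≥0 → ℝ) : Prop :=
  (∀ t : ℝ≥0, ContinuousWithinAt f (Set.Ici t) t) ∧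
  (∀ t : ℝ≥0, 0 < t → ∃ L : ℝ, Filter.Tendsto f (nhdsWithin t (Set.Iio t)) (nhds L))

/-- A càdlàg adapted real process for a filtration `F`. -/
def CadlagAdapted {Ω : Type*} [MeasurableSpace Ω] (F : ℝ≥0 → MeasurableSpace Ω)
    (Y : ℝ≥0 → Ω → ℝ) : Prop :=
  (∀ ω, IsCadlag fun t => Y t ω) ∧ (∀ t : ℝ≥0, Measurable[F t] (Y t))

/-- The space–time exit time `τₙ(ω) = inf{t ≥ 0 : |Yₜ(ω)| ≥ n} ∧ n`. -/
noncomputable def stopTau {Ω : Type*} (Y : ℝ≥0 → Ω → ℝ) (n : ℕ) (ω : Ω) : ℝ≥0 :=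
  sInf ({t : ℝ≥0 | (n : ℝ) ≤ |Y t ω|} ∪ {(n : ℝ≥0)})

/-- The stopped process `Yⁿ = Y^{τₙ}`. -/
noncomputable def stopped {Ω : Type*} (Y : ℝ≥0 → Ω → ℝ) (n : ℕ) : ℝ≥0 → Ω → ℝ :=
  fun t ω => Y (min (stopTau Y n ω) t) ω

/-- The martingale property (via set integrals) of a process for a filtration `F` and a
measure `μ`: integrability, together with `∫_A Y_t dμ = ∫_A Y_s dμ` for `s ≤ t` and
`A ∈ F s`. -/
def IsMartingaleOn {Ω : Type*} [MeasurableSpace Ω] (F : ℝ≥0 → MeasurableSpace Ω)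
    (μ : MeasureTheory.Measure Ω) (Y : ℝ≥0 → Ω → ℝ) : Prop :=
  (∀ t : ℝ≥0, MeasureTheory.Integrable (Y t) μ) ∧
  ∀ s t : ℝ≥0, s ≤ t → ∀ A : Set Ω, MeasurableSet[F s] A →
    ∫ ω in A, Y t ω ∂μ = ∫ ω in A, Y s ω ∂μ

/-- The adjusted concatenation on real paths:
`(x ⋆_t x')(s) = x(s)` for `s ≤ t` and `x(t) + x'(s−t) − x'(0)` for `s > t`. -/
noncomputable def adjConc (x : ℝ≥0 → ℝ) (t : ℝ≥0) (x' : ℝ≥0 → ℝ) : ℝ≥0 → ℝ :=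
  fun s => if s ≤ t then x s else x t + x' (s - t) - x' 0

/-- A TC-morphism from a TC-space into `(D_ℝ, ⋆)`: a map `Φ` into càdlàg real paths,
non-anticipating (each `Φ_t` is `𝓕ₜ`-measurable) and respecting concatenation:
`Φ(ω ∗_t ω') = Φ(ω) ⋆_t Φ(ω')` on the compatibility set. -/
def IsTCMorphismD {Ω : Type*} [mΩ : MeasurableSpace Ω] (X : TCSpace Ω)
    (Φ : Ω → ℝ≥0 → ℝ) : Prop :=
  (∀ ω, IsCadlag (Φ ω)) ∧
  (∀ t : ℝ≥0, Measurable[X.filt t] fun ω => Φ ω t) ∧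
  (∀ (t : ℝ≥0) (ω ω' : Ω), (ω, t, ω') ∈ X.Comp →
    Φ (X.conc ω t ω') = adjConc (Φ ω) t (Φ ω'))

/-- A TC-morphism into `(D_ℝ⁰, ⋆)`: a TC-morphism into `(D_ℝ, ⋆)` whose paths start at `0`. -/
def IsTCMorphismD0 {Ω : Type*} [mΩ : MeasurableSpace Ω] (X : TCSpace Ω)
    (Φ : Ω → ℝ≥0 → ℝ) : Prop :=
  IsTCMorphismD X Φ ∧ ∀ ω, Φ ω 0 = 0

/-- `Φ` is canonically locally bounded: there are constants `Mₙ` with `|Φⁿ_t(ω)| ≤ Mₙ`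
for all `ω`, `t`, where `Φⁿ` is `Φ` stopped at the space–time exit time `τₙ`. -/
def CanLocBounded {Ω : Type*} (Φ : Ω → ℝ≥0 → ℝ) : Prop :=
  ∃ M : ℕ → ℝ, ∀ (n : ℕ) (ω : Ω) (t : ℝ≥0),
    |stopped (fun t ω => Φ ω t) n t ω| ≤ M n

/-- A shift operator on a TC-space: a measurable partial inverse of concatenation with
`ω ∗_t θ_t(ω) = ω` and `(θ_t(ω))_{≤t+s} = (θ_t(ω_{≤s}))_{≤t+s}`. -/
def IsShift {Ω : Type*} [mΩ : MeasurableSpace Ω] (X : TCSpace Ω)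
    (θ : ℝ≥0 → Ω → Ω) : Prop :=
  Measurable (fun p : ℝ≥0 × Ω => θ p.1 p.2) ∧
  (∀ (t : ℝ≥0) (ω : Ω), (ω, t, θ t ω) ∈ X.Comp ∧ X.conc ω t (θ t ω) = ω) ∧
  (∀ (t s : ℝ≥0) (ω : Ω), X.T (t + s) (θ t ω) = X.T (t + s) (θ t (X.T s ω)))

/-- The shift at a stopping time, `θ_κ(ω) = θ_{κ(ω)}(ω)` with `θ_∞ = id`. -/
noncomputable def shiftStop {Ω : Type*}
    (θ : ℝ≥0 → Ω → Ω) (κ : Ω → ℝ≥0∞) (ω : Ω) : Ω :=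
  if κ ω = ∞ then ω else θ (κ ω).toNNReal ω

/-- The `(𝒟, X)`-generated control correspondence `𝒫̄(x)`: all Borel probability measures
under which every `Φⁿ`, `Φ ∈ 𝒟`, is a martingale and `X₀ = x` a.s. -/
def genCorr {Ω E : Type*} [mΩ : MeasurableSpace Ω] [MeasurableSpace E] (X : TCSpace Ω)
    {ι : Type*} (D : ι → Ω → ℝ≥0 → ℝ) (Xm : Ω → E) (x : E) :
    Set (MeasureTheory.ProbabilityMeasure Ω) :=
  {μ | (∀ i, ∀ n : ℕ, IsMartingaleOn X.filt (μ : MeasureTheory.Measure Ω)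
          (stopped (fun t ω => D i ω t) n)) ∧
       (μ : MeasureTheory.Measure Ω) {ω | Xm (X.T 0 ω) = x} = 1}

section AuxStmt14

variable {Ω : Type*} [mΩ : MeasurableSpace Ω]

lemma TSpace.meas_T_fixed (X : TSpace Ω) (t : ℝ≥0) : Measurable (X.T t) :=
  X.meas_T.comp (measurable_const.prodMk measurable_id)

lemma TSpace.filt_le (X : TSpace Ω) (t : ℝ≥0) : X.filt t ≤ mΩ := by
  rw [X.filt_eq]
  exact (X.meas_T_fixed t).comap_le

lemma TSpace.measurable_of_isStoppingTime (X : TSpace Ω) {τ : Ω → ℝ≥0∞}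
    (h : X.IsStoppingTime τ) : Measurable τ := by
  apply measurable_of_Iic
  intro x
  rcases eq_or_ne x ⊤ with rfl | hx
  · simp
  · have hxe : x = ((x.toNNReal : ℝ≥0) : ℝ≥0∞) := (ENNReal.coe_toNNReal hx).symm
    have he : τ ⁻¹' Set.Iic x = {ω | τ ω ≤ ((x.toNNReal : ℝ≥0) : ℝ≥0∞)} := by
      ext ω
      simp only [Set.mem_preimage, Set.mem_Iic, Set.mem_setOf_eq, ← hxe]
    rw [he]
    exact X.filt_le x.toNNReal _ (h x.toNNReal)

lemma TSpace.stopping_rep (X : TSpace Ω) {τ : Ω → ℝ≥0∞} (h : X.IsStoppingTime τ) (t : ℝ≥0) :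
    ∃ B : Set Ω, MeasurableSet B ∧ ∀ ω, (τ ω ≤ t ↔ X.T t ω ∈ B) := by
  have h' := h t
  rw [X.filt_eq] at h'
  obtain ⟨B, hB, hBeq⟩ := MeasurableSpace.measurableSet_comap.1 h'
  refine ⟨B, hB, fun ω => ?_⟩
  constructor
  · intro hτω
    have : ω ∈ {ω | τ ω ≤ (t : ℝ≥0∞)} := hτω
    rw [← hBeq] at this
    exact this
  · intro hω
    have : ω ∈ X.T t ⁻¹' B := hω
    rw [hBeq] at this
    exact this

lemma TSpace.stopping_eq_of_T_eq (X : TSpace Ω) {σ : Ω → ℝ≥0∞} (h : X.IsStoppingTime σ)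
    {ω₁ ω₂ : Ω} {t : ℝ≥0} (hT : X.T t ω₁ = X.T t ω₂) (h1 : σ ω₁ ≤ t) : σ ω₂ = σ ω₁ := by
  have key : ∀ s : ℝ≥0, s ≤ t → (σ ω₁ ≤ s ↔ σ ω₂ ≤ s) := by
    intro s hs
    obtain ⟨B, _, hiff⟩ := X.stopping_rep h s
    have hTs : X.T s ω₁ = X.T s ω₂ := by
      have e : ∀ ω, X.T s (X.T t ω) = X.T s ω := fun ω => by
        rw [X.T_comp, min_eq_right hs]
      rw [← e ω₁, ← e ω₂, hT]
    rw [hiff ω₁, hiff ω₂, hTs]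
  have h2 : σ ω₂ ≤ t := (key t le_rfl).1 h1
  have all : ∀ s : ℝ≥0, (σ ω₁ ≤ s ↔ σ ω₂ ≤ s) := by
    intro s
    rcases le_total s t with hst | hts
    · exact key s hst
    · have hts' : (t : ℝ≥0∞) ≤ s := ENNReal.coe_le_coe.2 hts
      exact ⟨fun _ => h2.trans hts', fun _ => h1.trans hts'⟩
  refine le_antisymm ?_ ?_
  · by_contra hlt
    push_neg at hlt
    obtain ⟨r, hr1, hr2⟩ := ENNReal.lt_iff_exists_nnreal_btwn.1 hlt
    exact absurd ((all r).1 hr1.le) (not_le.2 hr2)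
  · by_contra hlt
    push_neg at hlt
    obtain ⟨r, hr1, hr2⟩ := ENNReal.lt_iff_exists_nnreal_btwn.1 hlt
    exact absurd ((all r).2 hr1.le) (not_le.2 hr2)

end AuxStmt14

open Classical in
/-- For stopping times `κ ≤ τ` on a TC-space, the map
`τ'_ω(ω') = τ(ω ∗_κ ω') − κ(ω)` (set to `+∞` when `κ(ω) = ∞` or `ω' ∉ 𝒞_{ω,κ(ω)}`) is
jointly measurable, each `τ'_ω` is a stopping time, and
`τ(ω ∗_κ ω') = κ(ω) + τ'_ω(ω')` on its effective domain. -/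
theorem stmt14 {Ω : Type*} [mΩ : MeasurableSpace Ω] [StandardBorelSpace Ω]
    (X : TCSpace Ω) (κ τ : Ω → ℝ≥0∞)
    (hκ : X.toTSpace.IsStoppingTime κ) (hτ : X.toTSpace.IsStoppingTime τ)
    (hle : ∀ ω, κ ω ≤ τ ω)
    (τ' : Ω → Ω → ℝ≥0∞)
    (hτ'def : ∀ ω ω', τ' ω ω' =
      if κ ω < ⊤ ∧ (ω, (κ ω).toNNReal, ω') ∈ X.Comp then
        τ (X.conc ω (κ ω).toNNReal ω') - κ ω
      else ⊤) :
    Measurable (fun p : Ω × Ω => τ' p.1 p.2) ∧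
    (∀ ω : Ω, X.toTSpace.IsStoppingTime (τ' ω)) ∧
    (∀ ω ω' : Ω, κ ω < ⊤ → (ω, (κ ω).toNNReal, ω') ∈ X.Comp →
      τ (X.conc ω (κ ω).toNNReal ω') = κ ω + τ' ω ω') := by
  have hκm : Measurable κ := X.toTSpace.measurable_of_isStoppingTime hκ
  have hτm : Measurable τ := X.toTSpace.measurable_of_isStoppingTime hτ
  refine ⟨?_, ?_, ?_⟩
  · -- joint measurability
    have hAmap : Measurable fun p : Ω × Ω => (p.1, ((κ p.1).toNNReal, p.2)) :=
      measurable_fst.prodMk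
        ((ENNReal.measurable_toNNReal.comp (hκm.comp measurable_fst)).prodMk measurable_snd)
    set A : Set (Ω × Ω) := {p | κ p.1 < ⊤ ∧ (p.1, (κ p.1).toNNReal, p.2) ∈ X.Comp} with hA
    have hAmeas : MeasurableSet A := by
      have h1 : MeasurableSet {p : Ω × Ω | κ p.1 < ⊤} := by
        have := (hκm.comp (measurable_fst : Measurable fun p : Ω × Ω => p.1))
          (measurableSet_Iio (a := (⊤ : ℝ≥0∞)))
        exact this
      exact h1.inter (hAmap X.meas_Comp)
    have hfun : (fun p : Ω × Ω => τ' p.1 p.2) = fun p : Ω × Ω =>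
        if p ∈ A then τ (X.conc p.1 (κ p.1).toNNReal p.2) - κ p.1 else ⊤ := by
      funext p
      rw [hτ'def]
      by_cases hp : p ∈ A
      · rw [if_pos hp]
        exact if_pos hp
      · rw [if_neg hp]
        exact if_neg hp
    rw [hfun]
    apply measurable_of_restrict_of_restrict_compl hAmeas
    · have he : (A.domRestrict fun p : Ω × Ω =>
          if p ∈ A then τ (X.conc p.1 (κ p.1).toNNReal p.2) - κ p.1 else ⊤)
          = fun q : A =>
            τ (X.conc (q : Ω × Ω).1 (κ (q : Ω × Ω).1).toNNReal (q : Ω × Ω).2)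
              - κ (q : Ω × Ω).1 := by
        funext q
        simp only [Set.domRestrict_apply, if_pos q.2]
      rw [he]
      have hinto : Measurable fun q : A =>
          (⟨((q : Ω × Ω).1, (κ (q : Ω × Ω).1).toNNReal, (q : Ω × Ω).2), q.2.2⟩ : X.Comp) :=
        Measurable.subtype_mk (hAmap.comp measurable_subtype_coe)
      exact (hτm.comp (X.meas_conc.comp hinto)).sub
        ((hκm.comp measurable_fst).comp measurable_subtype_coe)
    · have he : (Aᶜ.domRestrict fun p : Ω × Ω =>
          if p ∈ A then τ (X.conc p.1 (κ p.1).toNNReal p.2) - κ p.1 else ⊤)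
          = fun _ => (⊤ : ℝ≥0∞) := by
        funext q
        simp only [Set.domRestrict_apply, if_neg q.2]
      rw [he]
      exact measurable_const
  · -- each τ' ω is a stopping time
    intro ω t
    rcases eq_or_ne (κ ω) ⊤ with hκω | hκω
    · have hset : {ω' | τ' ω ω' ≤ (t : ℝ≥0∞)} = ∅ := by
        ext ω'
        simp only [Set.mem_setOf_eq, Set.mem_empty_iff_false, iff_false]
        rw [hτ'def, if_neg (fun h => absurd h.1 (by simp [hκω]))]
        simp
      rw [hset]
      exact @MeasurableSet.empty _ (X.filt t)
    · set a := (κ ω).toNNReal with ha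
      have hka : κ ω = (a : ℝ≥0∞) := (ENNReal.coe_toNNReal hκω).symm
      set S : Set Ω := {ω' | (ω, a, ω') ∈ X.Comp} with hS
      have hSmeas : MeasurableSet S :=
        (measurable_const.prodMk (measurable_const.prodMk measurable_id)) X.meas_Comp
      rcases eq_zero_or_pos t with rfl | ht
      · -- t = 0
        obtain ⟨B, hB, hBiff⟩ := X.toTSpace.stopping_rep hτ a
        have hconcB : ∀ ω', (ω, a, ω') ∈ X.Comp →
            (τ (X.conc ω a ω') ≤ (a : ℝ≥0∞) ↔ X.T a ω ∈ B) := by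
          intro ω' hc
          rw [hBiff, X.trunc_conc_le ω a ω' a hc le_rfl]
        by_cases hmem : X.T a ω ∈ B
        · have hset : {ω' | τ' ω ω' ≤ ((0 : ℝ≥0) : ℝ≥0∞)} = S := by
            ext ω'
            simp only [Set.mem_setOf_eq, hS]
            rw [hτ'def]
            constructor
            · intro h
              by_contra hc
              rw [if_neg (fun hh => hc hh.2)] at h
              simp at h
            · intro hc
              rw [if_pos ⟨lt_top_iff_ne_top.2 hκω, hc⟩, tsub_le_iff_right]
              have := (hconcB ω' hc).2 hmem
              calc τ (X.conc ω a ω') ≤ (a : ℝ≥0∞) := this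
              _ = ((0 : ℝ≥0) : ℝ≥0∞) + κ ω := by rw [hka]; simp
          rw [hset, X.filt_eq]
          refine ⟨S, hSmeas, ?_⟩
          ext ω'
          simp only [Set.mem_preimage, hS, Set.mem_setOf_eq]
          exact (X.comp_right ω a ω' 0).symm
        · have hset : {ω' | τ' ω ω' ≤ ((0 : ℝ≥0) : ℝ≥0∞)} = ∅ := by
            ext ω'
            simp only [Set.mem_setOf_eq, Set.mem_empty_iff_false, iff_false]
            intro h
            rw [hτ'def] at h
            by_cases hc : (ω, a, ω') ∈ X.Comp
            · rw [if_pos ⟨lt_top_iff_ne_top.2 hκω, hc⟩, tsub_le_iff_right] at h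
              apply hmem
              refine (hconcB ω' hc).1 ?_
              calc τ (X.conc ω a ω') ≤ ((0 : ℝ≥0) : ℝ≥0∞) + κ ω := h
              _ = (a : ℝ≥0∞) := by rw [hka]; simp
            · rw [if_neg (fun hh => hc hh.2)] at h
              simp at h
          rw [hset]
          exact @MeasurableSet.empty _ (X.filt 0)
      · -- t > 0
        obtain ⟨B, hB, hBiff⟩ := X.toTSpace.stopping_rep hτ (a + t)
        have hg : Measurable fun η : S => X.conc ω a (η : Ω) := by
          have hm : Measurable fun η : S => (⟨(ω, a, (η : Ω)), η.2⟩ : X.Comp) :=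
            Measurable.subtype_mk
              (measurable_const.prodMk (measurable_const.prodMk measurable_subtype_coe))
          exact X.meas_conc.comp hm
        set E : Set Ω := Subtype.val '' ((fun η : S => X.conc ω a (η : Ω)) ⁻¹' B) with hE
        have hEmeas : MeasurableSet E := hSmeas.subtype_image (hg hB)
        have hEmem : ∀ η : Ω, η ∈ E ↔ (ω, a, η) ∈ X.Comp ∧ X.conc ω a η ∈ B := by
          intro η
          constructor
          · rintro ⟨⟨η₀, hη₀⟩, hpre, rfl⟩
            exact ⟨hη₀, hpre⟩
          · rintro ⟨h1, h2⟩
            exact ⟨⟨η, h1⟩, h2, rfl⟩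
        have hset : {ω' | τ' ω ω' ≤ (t : ℝ≥0∞)} = X.T t ⁻¹' E := by
          ext ω'
          simp only [Set.mem_setOf_eq, Set.mem_preimage, hEmem]
          rw [hτ'def]
          constructor
          · intro h
            by_cases hc : (ω, a, ω') ∈ X.Comp
            · rw [if_pos ⟨lt_top_iff_ne_top.2 hκω, hc⟩, tsub_le_iff_right] at h
              have hτle : τ (X.conc ω a ω') ≤ ((a + t : ℝ≥0) : ℝ≥0∞) := by
                calc τ (X.conc ω a ω') ≤ (t : ℝ≥0∞) + κ ω := h
                _ = ((a + t : ℝ≥0) : ℝ≥0∞) := by rw [hka, ENNReal.coe_add, add_comm]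
              have hTB := (hBiff _).1 hτle
              rw [X.trunc_conc_gt ω a ω' (a + t) hc (lt_add_of_pos_right a ht),
                add_tsub_cancel_left] at hTB
              exact ⟨(X.comp_right ω a ω' t).1 hc, hTB⟩
            · rw [if_neg (fun hh => hc hh.2)] at h
              simp at h
          · rintro ⟨h1, h2⟩
            have hc : (ω, a, ω') ∈ X.Comp := (X.comp_right ω a ω' t).2 h1
            rw [if_pos ⟨lt_top_iff_ne_top.2 hκω, hc⟩, tsub_le_iff_right]
            have hTB : X.T (a + t) (X.conc ω a ω') ∈ B := by
              rw [X.trunc_conc_gt ω a ω' (a + t) hc (lt_add_of_pos_right a ht),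
                add_tsub_cancel_left]
              exact h2
            calc τ (X.conc ω a ω') ≤ ((a + t : ℝ≥0) : ℝ≥0∞) := (hBiff _).2 hTB
            _ = (t : ℝ≥0∞) + κ ω := by rw [hka, ENNReal.coe_add, add_comm]
        rw [hset, X.filt_eq]
        exact ⟨E, hEmeas, rfl⟩
  · -- the concatenation identity
    intro ω ω' hκfin hc
    have hka : κ ω = ((κ ω).toNNReal : ℝ≥0∞) := (ENNReal.coe_toNNReal hκfin.ne).symm
    have hTa : X.T (κ ω).toNNReal (X.conc ω (κ ω).toNNReal ω') = X.T (κ ω).toNNReal ω :=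
      X.trunc_conc_le ω _ ω' _ hc le_rfl
    have hκconc : κ (X.conc ω (κ ω).toNNReal ω') = κ ω :=
      X.toTSpace.stopping_eq_of_T_eq hκ hTa.symm (le_of_eq hka)
    have hle' : κ ω ≤ τ (X.conc ω (κ ω).toNNReal ω') := by
      have h0 := hle (X.conc ω (κ ω).toNNReal ω')
      rwa [hκconc] at h0
    rw [hτ'def, if_pos ⟨hκfin, hc⟩]
    exact (add_tsub_cancel_of_le hle').symm
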